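/- Every locally finite ordinal metric is unbounded: if ρ is a locally finite ordinal metric on X, then for every k ∈ ω and every infinite A ⊆ X, there exist α, β ∈ A with ρ(α,β) > k. -/
import Mathlib


def IsOrdinalMetric (X : Set Ordinal) (ρ : Ordinal → Ordinal → ℕ) : Prop :=
  (∀ α ∈ X, ∀ β ∈ X, (ρ α β = 0 ↔ α = β)) ∧
  (∀ α ∈ X, ∀ β ∈ X, ρ α β = ρ β α) ∧
  (∀ α ∈ X, ∀ β ∈ X, ∀ γ ∈ X, α ≤ β → α ≤ γ → ρ α β ≤ max (ρ α γ) (ρ β γ)) ∧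
  (∀ β ∈ X, ∀ k : ℕ, {α | α ∈ X ∧ α ≤ β ∧ ρ α β ≤ k}.Finite)

def kClosure (X : Set Ordinal) (ρ : Ordinal → Ordinal → ℕ) (F : Finset Ordinal) (k : ℕ) :
    Set Ordinal :=
  {α | α ∈ X ∧ ∃ β ∈ F, α ≤ β ∧ ρ α β ≤ k}

def diam (ρ : Ordinal → Ordinal → ℕ) (F : Finset Ordinal) : ℕ :=
  F.sup fun α => F.sup fun β => ρ α β

def IsClosedSet (X : Set Ordinal) (ρ : Ordinal → Ordinal → ℕ) (F : Finset Ordinal) : Prop :=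
  F.Nonempty ∧ ↑F ⊆ X ∧ kClosure X ρ F (diam ρ F) = ↑F

/-- `ρ` is locally finite if, for every `k`, the sizes of closed sets of diameter `≤ k`
are uniformly bounded. -/
def LocallyFiniteMetric (X : Set Ordinal) (ρ : Ordinal → Ordinal → ℕ) : Prop :=
  ∀ k : ℕ, ∃ N : ℕ, ∀ F : Finset Ordinal, IsClosedSet X ρ F → diam ρ F ≤ k → F.card ≤ N

/-- Every locally finite ordinal metric is unbounded. -/
theorem locallyFinite_is_unbounded (X : Set Ordinal) (ρ : Ordinal → Ordinal → ℕ)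
    (h : IsOrdinalMetric X ρ) (hlf : LocallyFiniteMetric X ρ) :
    ∀ k : ℕ, ∀ A : Set Ordinal, A ⊆ X → A.Infinite →
      ∃ α ∈ A, ∃ β ∈ A, k < ρ α β := by
  intro k A hAX hA
  by_contra hcon
  push_neg at hcon
  obtain ⟨N, hN⟩ := hlf k
  obtain ⟨F, hFA, hFcard⟩ := hA.exists_subset_card_eq (N + 1)
  have hFX : (F : Set Ordinal) ⊆ X := fun a ha => hAX (hFA ha)
  obtain ⟨heq, hsymm, htri, hfin⟩ := h
  set d := diam ρ F with hd
  have hdk : d ≤ k := by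
    apply Finset.sup_le; intro a ha; apply Finset.sup_le; intro b hb
    exact hcon a (hFA ha) b (hFA hb)
  have hFd : ∀ a ∈ F, ∀ b ∈ F, ρ a b ≤ d := fun a ha b hb =>
    le_trans (Finset.le_sup (f := fun b => ρ a b) hb)
      (Finset.le_sup (f := fun a => F.sup fun b => ρ a b) ha)
  set S := kClosure X ρ F d with hS
  have hSX : S ⊆ X := fun α hα => hα.1
  have hkey : ∀ α ∈ S, ∀ γ ∈ F, ρ α γ ≤ d := by
    rintro α ⟨hαX, β, hβF, hαβ, hρ⟩ γ hγF
    rcases le_total α γ with hle | hle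
    · exact le_trans (htri α hαX γ (hFX hγF) β (hFX hβF) hle hαβ)
        (max_le hρ (hFd γ hγF β hβF))
    · have h2 := htri γ (hFX hγF) α hαX β (hFX hβF) hle (le_trans hle hαβ)
      rw [hsymm α hαX γ (hFX hγF)]
      exact le_trans h2 (max_le (hFd γ hγF β hβF) hρ)
  have hpair : ∀ α ∈ S, ∀ α' ∈ S, ρ α α' ≤ d := by
    have main : ∀ α ∈ S, ∀ α' ∈ S, α ≤ α' → ρ α α' ≤ d := by
      rintro α hαS α' hα'S hle
      obtain ⟨hα'X, β', hβ'F, hα'β', hρ'⟩ := hα'S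
      exact le_trans (htri α (hSX hαS) α' hα'X β' (hFX hβ'F) hle (le_trans hle hα'β'))
        (max_le (hkey α hαS β' hβ'F) hρ')
    intro α hα α' hα'
    rcases le_total α α' with hle | hle
    · exact main α hα α' hα' hle
    · rw [hsymm α (hSX hα) α' (hSX hα')]; exact main α' hα' α hα hle
  have hSfin : S.Finite := by
    have hsub : S ⊆ ⋃ β ∈ F, {α | α ∈ X ∧ α ≤ β ∧ ρ α β ≤ d} := by
      rintro α ⟨hαX, β, hβF, h1, h2⟩
      exact Set.mem_biUnion hβF ⟨hαX, h1, h2⟩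
    exact Set.Finite.subset (Set.Finite.biUnion F.finite_toSet
      (fun β hβ => hfin β (hFX hβ) d)) hsub
  set F' := hSfin.toFinset with hF'
  have hmemF' : ∀ α, α ∈ F' ↔ α ∈ S := fun α => hSfin.mem_toFinset
  have hFF' : F ⊆ F' := by
    intro β hβ
    rw [hmemF']
    exact ⟨hFX hβ, β, hβ, le_refl β,
      by rw [(heq β (hFX hβ) β (hFX hβ)).2 rfl]; exact Nat.zero_le _⟩
  have hF'X : (F' : Set Ordinal) ⊆ X := fun α hα => hSX ((hmemF' α).1 hα)
  have hd' : diam ρ F' ≤ d := by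
    apply Finset.sup_le; intro a ha; apply Finset.sup_le; intro b hb
    exact hpair a ((hmemF' a).1 ha) b ((hmemF' b).1 hb)
  have hne : F'.Nonempty := by
    have : F.Nonempty := Finset.card_pos.mp (by omega)
    exact this.mono hFF'
  have hclosed : IsClosedSet X ρ F' := by
    refine ⟨hne, hF'X, ?_⟩
    ext α
    constructor
    · rintro ⟨hαX, β', hβ'F', h1, h2⟩
      have hβ'S : β' ∈ S := (hmemF' β').1 hβ'F'
      obtain ⟨hβ'X, β, hβF, hβ'β, hρ⟩ := hβ'S
      have hαβ : α ≤ β := le_trans h1 hβ'β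
      have h3 := htri α hαX β (hFX hβF) β' hβ'X hαβ h1
      have h4 : ρ β β' ≤ d := by
        rw [hsymm β (hFX hβF) β' hβ'X]; exact hρ
      have h5 : ρ α β' ≤ d := le_trans h2 hd'
      have : α ∈ S := ⟨hαX, β, hβF, hαβ, le_trans h3 (max_le h5 h4)⟩
      exact Finset.mem_coe.mpr ((hmemF' α).2 this)
    · intro hα
      have hαS : α ∈ S := (hmemF' α).1 (Finset.mem_coe.mp hα)
      exact ⟨hSX hαS, α, Finset.mem_coe.mp hα, le_refl α,
        by rw [(heq α (hSX hαS) α (hSX hαS)).2 rfl]; exact Nat.zero_le _⟩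
  have hcard := hN F' hclosed (le_trans hd' hdk)
  have := Finset.card_le_card hFF'
  omega
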